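/- The map T preserves the measure μ: T is measurable and μ(T^{−1}A) = μ(A) for every measurable A ⊆ Φ; that is, the pushforward of μ = m × Π under T equals μ. -/

import Mathlib

open MeasureTheory Filter Topology

namespace RWRE

/-- `ℤ^d` -/
abbrev Zd (d : ℕ) := Fin d → ℤ

variable {Ω : Type*} {d N : ℕ}

/-- `q_i(ω) = p_{0 d_i}(ω)`. -/
noncomputable def q (p : Ω → Zd d → Zd d → ℝ) (dv : Fin N → Zd d) (ω : Ω) (i : Fin N) : ℝ :=
  p ω 0 (dv i)

/-- Partial sums `a_i(ω) = q_1(ω) + ⋯ + q_i(ω)`, `a_0 = 0`. -/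
noncomputable def aPt (p : Ω → Zd d → Zd d → ℝ) (dv : Fin N → Zd d) (ω : Ω) : ℕ → ℝ
  | 0 => 0
  | (i + 1) => aPt p dv ω i + (if h : i < N then q p dv ω ⟨i, h⟩ else 0)

/-- `i(s,ω)`: the unique `i` with `s ∈ I_i(ω) = [a_{i-1}(ω), a_i(ω))`. -/
noncomputable def idx [NeZero N] (p : Ω → Zd d → Zd d → ℝ) (dv : Fin N → Zd d)
    (s : ℝ) (ω : Ω) : Fin N :=
  if h : ∃ i : Fin N, aPt p dv ω i ≤ s ∧ s < aPt p dv ω (i + 1) then h.choose else 0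

/-- The displacement function `D(s,ω) = d_{i(s,ω)}`. -/
noncomputable def Dspl [NeZero N] (p : Ω → Zd d → Zd d → ℝ) (dv : Fin N → Zd d)
    (s : ℝ) (ω : Ω) : Zd d :=
  dv (idx p dv s ω)

/-- The fiber map `φ(s,ω) = q_{i(s,ω)}(ω)⁻¹ (s - a_{i(s,ω)-1}(ω))`. -/
noncomputable def fib [NeZero N] (p : Ω → Zd d → Zd d → ℝ) (dv : Fin N → Zd d)
    (s : ℝ) (ω : Ω) : ℝ :=
  (q p dv ω (idx p dv s ω))⁻¹ * (s - aPt p dv ω (idx p dv s ω))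

/-- The point-of-view-of-the-particle map `T(s,ω) = (φ(s,ω), τ_{D(s,ω)} ω)`. -/
noncomputable def T [NeZero N] (τ : Zd d → Ω → Ω) (p : Ω → Zd d → Zd d → ℝ)
    (dv : Fin N → Zd d) : ℝ × Ω → ℝ × Ω :=
  fun x => (fib p dv x.1 x.2, τ (Dspl p dv x.1 x.2) x.2)

/-- The walk `X_n = Σ_{k<n} D ∘ T^k`. -/
noncomputable def X [NeZero N] (τ : Zd d → Ω → Ω) (p : Ω → Zd d → Zd d → ℝ)
    (dv : Fin N → Zd d) (n : ℕ) (x : ℝ × Ω) : Zd d :=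
  ∑ k ∈ Finset.range n, Dspl p dv ((T τ p dv)^[k] x).1 ((T τ p dv)^[k] x).2

/-- `n`-step transition probabilities. -/
noncomputable def nstep (p : Ω → Zd d → Zd d → ℝ) (ω : Ω) : ℕ → Zd d → Zd d → ℝ
  | 0 => fun x y => if x = y then 1 else 0
  | (n + 1) => fun x y => ∑' z, nstep p ω n x z * p ω z y



section Aux
variable (p : Ω → Zd d → Zd d → ℝ) (dv : Fin N → Zd d)

lemma aPt_succ (ω : Ω) (i : Fin N) :
    aPt p dv ω (i + 1) = aPt p dv ω i + q p dv ω i := by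
  simp [aPt, i.isLt]

lemma aPt_mono (ω : Ω) (hq : ∀ i : Fin N, 0 ≤ q p dv ω i) : Monotone (aPt p dv ω) := by
  apply monotone_nat_of_le_succ
  intro n
  show aPt p dv ω n ≤ aPt p dv ω n + _
  split
  · simpa using hq _
  · simp

lemma aPt_eq_sum (ω : Ω) (n : ℕ) :
    aPt p dv ω n = ∑ j ∈ Finset.range n, (if h : j < N then q p dv ω ⟨j, h⟩ else 0) := by
  induction n with
  | zero => simp [aPt]
  | succ n ih => rw [Finset.sum_range_succ, ← ih]; rfl

lemma sum_q (ω : Ω) (hdv : Function.Injective dv)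
    (hnorm : HasSum (fun y => p ω 0 y) 1)
    (hrange : ∀ x y, p ω x y ≠ 0 → ∃ i, y - x = dv i) :
    ∑ i : Fin N, q p dv ω i = 1 := by
  have hsupp : ∀ y ∉ Set.range dv, p ω 0 y = 0 := by
    intro y hy
    by_contra h
    obtain ⟨i, hi⟩ := hrange 0 y h
    exact hy ⟨i, by simpa using hi.symm⟩
  have := (Function.Injective.hasSum_iff hdv hsupp).2 hnorm
  exact this.tsum_eq ▸ (tsum_fintype (L := SummationFilter.unconditional _) (fun i => q p dv ω i)).symm ▸ rfl

lemma sum_q_neg (ω : Ω) (hdv : Function.Injective dv)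
    (hbis : HasSum (fun x => p ω x 0) 1)
    (hrange : ∀ x y, p ω x y ≠ 0 → ∃ i, y - x = dv i) :
    ∑ i : Fin N, p ω (-(dv i)) 0 = 1 := by
  have hinj : Function.Injective (fun i : Fin N => -(dv i)) :=
    fun a b h => hdv (neg_injective h)
  have hsupp : ∀ x ∉ Set.range (fun i : Fin N => -(dv i)), p ω x 0 = 0 := by
    intro x hx
    by_contra h
    obtain ⟨i, hi⟩ := hrange x 0 h
    rw [zero_sub] at hi
    exact hx ⟨i, by show -dv i = x; rw [← hi, neg_neg]⟩
  have := (Function.Injective.hasSum_iff hinj hsupp).2 hbis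
  exact this.tsum_eq ▸ (tsum_fintype (L := SummationFilter.unconditional _) (fun i : Fin N => p ω (-(dv i)) 0)).symm ▸ rfl

lemma aPt_N (ω : Ω) (hsum : ∑ i : Fin N, q p dv ω i = 1) : aPt p dv ω N = 1 := by
  rw [aPt_eq_sum, ← hsum,
    ← Fin.sum_univ_eq_sum_range (fun j => if h : j < N then q p dv ω ⟨j, h⟩ else 0) N]
  exact Finset.sum_congr rfl (fun i _ => by simp [i.isLt])

lemma aPt_nonneg (ω : Ω) (hq : ∀ i : Fin N, 0 ≤ q p dv ω i) (n : ℕ) :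
    0 ≤ aPt p dv ω n := by
  have := aPt_mono p dv ω hq (Nat.zero_le n)
  simpa [aPt] using this

lemma aPt_unique (ω : Ω) (hq : ∀ i : Fin N, 0 ≤ q p dv ω i) {s : ℝ} {i j : Fin N}
    (hi : aPt p dv ω i ≤ s ∧ s < aPt p dv ω (i + 1))
    (hj : aPt p dv ω j ≤ s ∧ s < aPt p dv ω (j + 1)) : i = j := by
  have hm := aPt_mono p dv ω hq
  rcases lt_trichotomy i j with h | h | h
  · have : ((i : ℕ) + 1) ≤ (j : ℕ) := h
    exact absurd (lt_of_lt_of_le hi.2 (le_trans (hm this) hj.1)) (lt_irrefl s)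
  · exact h
  · have : ((j : ℕ) + 1) ≤ (i : ℕ) := h
    exact absurd (lt_of_lt_of_le hj.2 (le_trans (hm this) hi.1)) (lt_irrefl s)

lemma idx_eq [NeZero N] (ω : Ω) (hq : ∀ i : Fin N, 0 ≤ q p dv ω i) {s : ℝ} {i : Fin N}
    (hi : aPt p dv ω i ≤ s ∧ s < aPt p dv ω (i + 1)) : idx p dv s ω = i := by
  have h : ∃ j : Fin N, aPt p dv ω j ≤ s ∧ s < aPt p dv ω (j + 1) := ⟨i, hi⟩
  rw [idx, dif_pos h]
  exact aPt_unique p dv ω hq h.choose_spec hi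

lemma exists_idx [NeZero N] (ω : Ω) (hq : ∀ i : Fin N, 0 ≤ q p dv ω i)
    (haN : aPt p dv ω N = 1) {s : ℝ} (hs0 : 0 ≤ s) (hs1 : s < 1) :
    ∃ i : Fin N, aPt p dv ω i ≤ s ∧ s < aPt p dv ω (i + 1) := by
  have hm := aPt_mono p dv ω hq
  have hex : ∃ k, s < aPt p dv ω k := ⟨N, haN ▸ hs1⟩
  classical
  have hk : s < aPt p dv ω (Nat.find hex) := Nat.find_spec hex
  have hk0 : Nat.find hex ≠ 0 := by
    intro h
    rw [h] at hk
    simp only [aPt] at hk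
    linarith
  obtain ⟨m, hm'⟩ := Nat.exists_eq_succ_of_ne_zero hk0
  have hmlt : ¬ s < aPt p dv ω m := Nat.find_min hex (by omega)
  push_neg at hmlt
  have hmN : m < N := by
    by_contra hge
    push_neg at hge
    have := le_trans (haN ▸ hm hge) hmlt
    linarith
  exact ⟨⟨m, hmN⟩, hmlt, by rw [hm'] at hk; exact hk⟩

lemma idx_eq_iff [NeZero N] (hq : ∀ ω, ∀ i : Fin N, 0 ≤ q p dv ω i) (s : ℝ) (ω : Ω) (i : Fin N) :
    idx p dv s ω = i ↔
      ((aPt p dv ω i ≤ s ∧ s < aPt p dv ω (i + 1)) ∨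
        (i = 0 ∧ ∀ j : Fin N, ¬(aPt p dv ω j ≤ s ∧ s < aPt p dv ω (j + 1)))) := by
  by_cases hex : ∃ j : Fin N, aPt p dv ω j ≤ s ∧ s < aPt p dv ω (j + 1)
  · rw [idx, dif_pos hex]
    constructor
    · intro h; exact Or.inl (h ▸ hex.choose_spec)
    · rintro (h | ⟨h0, hall⟩)
      · exact aPt_unique p dv ω (hq ω) hex.choose_spec h
      · exact absurd hex.choose_spec (hall _)
  · rw [idx, dif_neg hex]
    constructor
    · intro h; exact Or.inr ⟨h.symm, not_exists.1 hex⟩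
    · rintro (h | ⟨h0, _⟩)
      · exact absurd ⟨i, h⟩ hex
      · exact h0.symm

variable [MeasurableSpace Ω]

lemma aPt_meas (hp_meas : ∀ x y, Measurable fun ω => p ω x y) (n : ℕ) :
    Measurable fun ω => aPt p dv ω n := by
  induction n with
  | zero => simpa [aPt] using measurable_const
  | succ n ih =>
    show Measurable fun ω => aPt p dv ω n + (if h : n < N then q p dv ω ⟨n, h⟩ else 0)
    rcases Nat.lt_or_ge n N with h | h
    · simp only [dif_pos h]; exact ih.add (hp_meas 0 (dv ⟨n, h⟩))
    · simp only [dif_neg (Nat.not_lt.2 h)]; exact ih.add measurable_const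

lemma measurable_idx [NeZero N] (hp_meas : ∀ x y, Measurable fun ω => p ω x y)
    (hq : ∀ ω, ∀ i : Fin N, 0 ≤ q p dv ω i) :
    Measurable fun x : ℝ × Ω => idx p dv x.1 x.2 := by
  have hSm : ∀ j : Fin N,
      MeasurableSet {x : ℝ × Ω | aPt p dv x.2 j ≤ x.1 ∧ x.1 < aPt p dv x.2 (j + 1)} := by
    intro j
    exact (measurableSet_le ((aPt_meas p dv hp_meas j).comp measurable_snd) measurable_fst).inter
      (measurableSet_lt measurable_fst ((aPt_meas p dv hp_meas (j + 1)).comp measurable_snd))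
  apply measurable_to_countable'
  intro i
  have heq : (fun x : ℝ × Ω => idx p dv x.1 x.2) ⁻¹' {i}
      = {x : ℝ × Ω | aPt p dv x.2 i ≤ x.1 ∧ x.1 < aPt p dv x.2 (i + 1)} ∪
        ({x : ℝ × Ω | i = 0} ∩
          ⋂ j : Fin N, {x : ℝ × Ω | aPt p dv x.2 j ≤ x.1 ∧ x.1 < aPt p dv x.2 (j + 1)}ᶜ) := by
    ext x
    simp only [Set.mem_preimage, Set.mem_singleton_iff, idx_eq_iff p dv hq, Set.mem_union,
      Set.mem_inter_iff, Set.mem_setOf_eq, Set.mem_iInter, Set.mem_compl_iff]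
  rw [heq]
  refine (hSm i).union (MeasurableSet.inter ?_ (MeasurableSet.iInter fun j => (hSm j).compl))
  by_cases hi : i = 0 <;> simp [hi]

lemma measurable_T [NeZero N] (τ : Zd d → Ω → Ω) (hτ : ∀ z, Measurable (τ z))
    (hp_meas : ∀ x y, Measurable fun ω => p ω x y)
    (hq : ∀ ω, ∀ i : Fin N, 0 ≤ q p dv ω i) : Measurable (T τ p dv) := by
  have hF : Measurable fun y : (ℝ × Ω) × Fin N =>
      ((q p dv y.1.2 y.2)⁻¹ * (y.1.1 - aPt p dv y.1.2 y.2), τ (dv y.2) y.1.2) := by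
    apply measurable_from_prod_countable_left
    intro i
    refine Measurable.prod ?_ ?_
    · exact (((hp_meas 0 (dv i)).comp measurable_snd).inv).mul
        (measurable_fst.sub ((aPt_meas p dv hp_meas i).comp measurable_snd))
    · exact (hτ (dv i)).comp measurable_snd
  exact hF.comp (measurable_id.prodMk (measurable_idx p dv hp_meas hq))

lemma slice_measure [NeZero N] (τ : Zd d → Ω → Ω) (ω : Ω)
    (hq : ∀ i : Fin N, 0 ≤ q p dv ω i) (i : Fin N) (A : Set (ℝ × Ω)) :
    volume ({s : ℝ | T τ p dv (s, ω) ∈ A} ∩ Set.Ico (aPt p dv ω i) (aPt p dv ω (i + 1)))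
      = ENNReal.ofReal (q p dv ω i) *
        volume ({t : ℝ | (t, τ (dv i) ω) ∈ A} ∩ Set.Ico (0:ℝ) 1) := by
  have hsucc : aPt p dv ω ((i : ℕ) + 1) = aPt p dv ω i + q p dv ω i := aPt_succ p dv ω i
  rcases eq_or_lt_of_le (hq i) with hc | hc
  · rw [hsucc, ← hc, add_zero, Set.Ico_self, Set.inter_empty, measure_empty,
      ENNReal.ofReal_zero, zero_mul]
  · set a := aPt p dv ω i with ha
    set c := q p dv ω i with hcq
    have hkey : {s : ℝ | T τ p dv (s, ω) ∈ A} ∩ Set.Ico a (aPt p dv ω ((i : ℕ) + 1))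
        = (fun s : ℝ => c⁻¹ * (s - a)) ⁻¹' ({t : ℝ | (t, τ (dv i) ω) ∈ A} ∩ Set.Ico (0:ℝ) 1) := by
      ext s
      simp only [Set.mem_inter_iff, Set.mem_setOf_eq, Set.mem_Ico, Set.mem_preimage, hsucc]
      constructor
      · rintro ⟨hA', h1, h2⟩
        have hidx : idx p dv s ω = i :=
          idx_eq p dv ω hq ⟨h1, by rw [hsucc]; exact h2⟩
        have hTeq : T τ p dv (s, ω) = (c⁻¹ * (s - a), τ (dv i) ω) := by
          simp [T, fib, Dspl, hidx, ha, hcq]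
        refine ⟨by rwa [hTeq] at hA', ?_, ?_⟩
        · exact mul_nonneg (inv_pos.2 hc).le (by linarith)
        · rw [inv_mul_eq_div, div_lt_one hc]; linarith
      · rintro ⟨hA', h0, h1⟩
        have hs1 : a ≤ s := by
          have h' : 0 ≤ c * (c⁻¹ * (s - a)) := mul_nonneg hc.le h0
          rw [mul_inv_cancel_left₀ hc.ne'] at h'
          linarith
        have hs2 : s < a + c := by
          rw [inv_mul_eq_div, div_lt_one hc] at h1
          linarith
        have hidx : idx p dv s ω = i :=
          idx_eq p dv ω hq ⟨hs1, by rw [hsucc]; exact hs2⟩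
        have hTeq : T τ p dv (s, ω) = (c⁻¹ * (s - a), τ (dv i) ω) := by
          simp [T, fib, Dspl, hidx, ha, hcq]
        exact ⟨by rwa [hTeq], hs1, hs2⟩
    rw [hkey]
    have hcomp : (fun s : ℝ => c⁻¹ * (s - a))
        = (fun u : ℝ => c⁻¹ * u) ∘ (fun s : ℝ => s + (-a)) := by
      funext s; simp [sub_eq_add_neg]
    rw [hcomp, Set.preimage_comp]
    rw [measure_preimage_add_right]
    rw [Real.volume_preimage_mul_left (inv_ne_zero hc.ne')]
    rw [inv_inv, abs_of_pos hc]

end Aux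

/-- The map `T` preserves the measure `μ = m × Π`. -/
theorem T_measurePreserving
    {d N : ℕ} [NeZero N] (hd : 1 ≤ d)
    {Ω : Type*} [MeasurableSpace Ω] (Pm : Measure Ω) [IsProbabilityMeasure Pm]
    (τ : Zd d → Ω → Ω) (p : Ω → Zd d → Zd d → ℝ) (dv : Fin N → Zd d)
    (hτ : ∀ z, MeasurePreserving (τ z) Pm Pm)
    (hτ_zero : τ 0 = id)
    (hτ_add : ∀ z z' ω, τ z (τ z' ω) = τ (z + z') ω)
    (hdv : Function.Injective dv)
    (hp_meas : ∀ x y, Measurable fun ω => p ω x y)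
    (hp_nn : ∀ ω x y, 0 ≤ p ω x y)
    (hp_le : ∀ ω x y, p ω x y ≤ 1)
    (hnorm : ∀ ω x, HasSum (fun y => p ω x y) 1)
    (hbis : ∀ ω y, HasSum (fun x => p ω x y) 1)
    (hrange : ∀ ω x y, p ω x y ≠ 0 → ∃ i, y - x = dv i)
    (hequiv : ∀ ω x y z, p (τ z ω) x y = p ω (x + z) (y + z)) :
    MeasurePreserving (T τ p dv)
      ((volume.restrict (Set.Ico (0:ℝ) 1)).prod Pm)
      ((volume.restrict (Set.Ico (0:ℝ) 1)).prod Pm) := by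
  classical
  have hq_nn : ∀ ω, ∀ i : Fin N, 0 ≤ q p dv ω i := fun ω i => hp_nn ω 0 (dv i)
  have hsum : ∀ ω, ∑ i : Fin N, q p dv ω i = 1 :=
    fun ω => sum_q p dv ω hdv (hnorm ω 0) (hrange ω)
  have haN : ∀ ω, aPt p dv ω N = 1 := fun ω => aPt_N p dv ω (hsum ω)
  have hT : Measurable (T τ p dv) :=
    measurable_T p dv τ (fun z => (hτ z).measurable) hp_meas hq_nn
  refine ⟨hT, ?_⟩
  refine Measure.ext fun A hA => ?_
  rw [Measure.map_apply hT hA, Measure.prod_apply_symm (hT hA), Measure.prod_apply_symm hA]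
  set m := volume.restrict (Set.Ico (0:ℝ) 1) with hm
  set g : Ω → ENNReal := fun ω => m ((fun t => (t, ω)) ⁻¹' A) with hg
  have hgm : Measurable g := measurable_measure_prodMk_right hA
  have hgval : ∀ ω, g ω = volume ({t : ℝ | (t, ω) ∈ A} ∩ Set.Ico (0:ℝ) 1) := by
    intro ω
    show (volume.restrict (Set.Ico (0:ℝ) 1)) ((fun t => (t, ω)) ⁻¹' A) = _
    rw [Measure.restrict_apply' measurableSet_Ico]
    rfl
  have hslice : ∀ ω, m ((fun s => (s, ω)) ⁻¹' (T τ p dv ⁻¹' A))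
      = ∑ i : Fin N, ENNReal.ofReal (q p dv ω i) * g (τ (dv i) ω) := by
    intro ω
    have hBmeas : MeasurableSet ((fun s : ℝ => (s, ω)) ⁻¹' (T τ p dv ⁻¹' A)) :=
      (hT hA).preimage measurable_prodMk_right
    set B : Set ℝ := (fun s : ℝ => (s, ω)) ⁻¹' (T τ p dv ⁻¹' A) with hB
    have hcover : B ∩ Set.Ico (0:ℝ) 1
        = ⋃ i : Fin N, (B ∩ Set.Ico (aPt p dv ω i) (aPt p dv ω (i + 1))) := by
      ext s
      simp only [Set.mem_inter_iff, Set.mem_Ico, Set.mem_iUnion]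
      constructor
      · rintro ⟨hBs, hs0, hs1⟩
        obtain ⟨i, hi⟩ := exists_idx p dv ω (hq_nn ω) (haN ω) hs0 hs1
        exact ⟨i, hBs, hi⟩
      · rintro ⟨i, hBs, hi⟩
        refine ⟨hBs, le_trans (aPt_nonneg p dv ω (hq_nn ω) i) hi.1,
          lt_of_lt_of_le hi.2 ?_⟩
        rw [← haN ω]
        exact aPt_mono p dv ω (hq_nn ω) i.isLt
    have hdisj : Pairwise (Function.onFun Disjoint
        fun i : Fin N => B ∩ Set.Ico (aPt p dv ω i) (aPt p dv ω (i + 1))) := by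
      intro i j hij
      refine Set.disjoint_left.2 ?_
      rintro s ⟨-, hi⟩ ⟨-, hj⟩
      exact hij (aPt_unique p dv ω (hq_nn ω) (Set.mem_Ico.1 hi) (Set.mem_Ico.1 hj))
    rw [hm, Measure.restrict_apply' measurableSet_Ico, hcover,
      measure_iUnion hdisj (fun i => hBmeas.inter measurableSet_Ico), tsum_fintype]
    refine Finset.sum_congr rfl fun i _ => ?_
    rw [hgval (τ (dv i) ω)]
    exact slice_measure p dv τ ω (hq_nn ω) i A
  calc ∫⁻ ω, m ((fun s => (s, ω)) ⁻¹' (T τ p dv ⁻¹' A)) ∂Pm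
      = ∫⁻ ω, ∑ i : Fin N, ENNReal.ofReal (q p dv ω i) * g (τ (dv i) ω) ∂Pm :=
        lintegral_congr hslice
    _ = ∑ i : Fin N, ∫⁻ ω, ENNReal.ofReal (q p dv ω i) * g (τ (dv i) ω) ∂Pm :=
        lintegral_finset_sum _ (fun i _ =>
          ((hp_meas 0 (dv i)).ennreal_ofReal).mul (hgm.comp (hτ (dv i)).measurable))
    _ = ∑ i : Fin N, ∫⁻ ω, (fun η => ENNReal.ofReal (p η (-(dv i)) 0) * g η) (τ (dv i) ω) ∂Pm := by
        refine Finset.sum_congr rfl fun i _ => lintegral_congr fun ω => ?_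
        have hpe : p (τ (dv i) ω) (-(dv i)) 0 = p ω 0 (dv i) := by
          rw [hequiv ω (-(dv i)) 0 (dv i)]
          simp
        simp only [hpe]
        rfl
    _ = ∑ i : Fin N, ∫⁻ η, ENNReal.ofReal (p η (-(dv i)) 0) * g η ∂Pm :=
        Finset.sum_congr rfl fun i _ => (hτ (dv i)).lintegral_comp
          (((hp_meas (-(dv i)) 0).ennreal_ofReal).mul hgm)
    _ = ∫⁻ η, ∑ i : Fin N, ENNReal.ofReal (p η (-(dv i)) 0) * g η ∂Pm :=
        (lintegral_finset_sum _ (fun i _ =>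
          ((hp_meas (-(dv i)) 0).ennreal_ofReal).mul hgm)).symm
    _ = ∫⁻ η, g η ∂Pm := by
        refine lintegral_congr fun η => ?_
        rw [← Finset.sum_mul]
        have h1 : ∑ i : Fin N, ENNReal.ofReal (p η (-(dv i)) 0) = 1 := by
          rw [← ENNReal.ofReal_sum_of_nonneg (fun i _ => hp_nn η (-(dv i)) 0),
            sum_q_neg p dv η hdv (hbis η 0) (hrange η), ENNReal.ofReal_one]
        rw [h1, one_mul]


end RWRE
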